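/- Define H₀ ∈ ℝ^{n×n} by (H₀)_{ij} = 1 if j = i+1 and 0 otherwise. Then for any lower Hessenberg matrix A (i.e., a_{ij}=0 for j>i+1) and any q ∈ ℂ*, Per_q(A) = per(q^{H₀} ∘ A), where q^{H₀} is the matrix with entries q^{(H₀)_{ij}} and ∘ is the entrywise (Hadamard) product. -/
import Mathlib


/-- The inversion number of a permutation of `Fin n`. -/
def inversions {n : ℕ} (σ : Equiv.Perm (Fin n)) : ℕ :=
  (Finset.univ.filter (fun p : Fin n × Fin n => p.1 < p.2 ∧ σ p.2 < σ p.1)).card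

/-- The q-permanent of a complex matrix. -/
noncomputable def qperm {n : ℕ} (q : ℂ) (A : Matrix (Fin n) (Fin n) ℂ) : ℂ :=
  ∑ σ : Equiv.Perm (Fin n), q ^ inversions σ * ∏ i, A i (σ i)


/-- The permanent of a complex matrix. -/
noncomputable def perman {n : ℕ} (A : Matrix (Fin n) (Fin n) ℂ) : ℂ :=
  ∑ σ : Equiv.Perm (Fin n), ∏ i, A i (σ i)

/-- The superdiagonal 0/1 exponent matrix. -/
def H0 (n : ℕ) : Matrix (Fin n) (Fin n) ℕ :=
  Matrix.of fun i j => if (j : ℕ) = (i : ℕ) + 1 then 1 else 0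

open Finset
lemma key {n : ℕ} (σ : Equiv.Perm (Fin n)) (h : ∀ k : Fin n, (σ k : ℕ) ≤ (k : ℕ) + 1) :
    inversions σ = (univ.filter fun i : Fin n => (σ i : ℕ) = (i : ℕ) + 1).card := by
  unfold inversions
  apply Finset.card_bij (fun p _ => p.1)
  · rintro ⟨i, j⟩ hp
    simp only [mem_filter, mem_univ, true_and] at hp ⊢
    obtain ⟨hij, hσ⟩ := hp
    by_contra hne
    have hle : (σ i : ℕ) ≤ (i : ℕ) := by have := h i; omega
    have hcard := Finset.card_le_card_of_injOn σ
      (s := insert j (Iic i)) (t := Iic i)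
      (fun k hk => by
        rcases Finset.mem_insert.mp hk with rfl | hk
        · exact Finset.mem_Iic.mpr (Fin.le_def.mpr (le_trans (le_of_lt (Fin.lt_def.mp hσ)) hle))
        · have hki : (k : ℕ) ≤ (i : ℕ) := Fin.le_def.mp (Finset.mem_Iic.mp hk)
          have := h k
          exact Finset.mem_Iic.mpr (Fin.le_def.mpr (by
            rcases eq_or_lt_of_le hki with heq | hlt
            · have : k = i := Fin.ext heq
              subst this; exact hle
            · omega)))
      (fun a _ b _ hab => σ.injective hab)
    rw [Finset.card_insert_of_notMem (fun hj => absurd (Finset.mem_Iic.mp hj) (not_le.mpr hij)),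
      Fin.card_Iic] at hcard
    omega
  · rintro ⟨i, j⟩ hp ⟨i', j'⟩ hp' (heq : i = i')
    subst heq
    simp only [mem_filter, mem_univ, true_and] at hp hp'
    obtain ⟨hij, hσ⟩ := hp
    obtain ⟨hij', hσ'⟩ := hp'
    by_contra hne
    have hjj' : j ≠ j' := fun hh => hne (by simp [hh])
    have hvj : (σ j : ℕ) ≤ (i : ℕ) := by
      have := Fin.lt_def.mp hσ; have := h i; omega
    have hvj' : (σ j' : ℕ) ≤ (i : ℕ) := by
      have := Fin.lt_def.mp hσ'; have := h i; omega
    have hcard := Finset.card_le_card_of_injOn σ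
      (s := insert j (insert j' (Iio i))) (t := Iic i)
      (fun k hk => by
        rcases Finset.mem_insert.mp hk with rfl | hk
        · exact Finset.mem_Iic.mpr (Fin.le_def.mpr hvj)
        rcases Finset.mem_insert.mp hk with rfl | hk
        · exact Finset.mem_Iic.mpr (Fin.le_def.mpr hvj')
        · have hki : (k : ℕ) < (i : ℕ) := Fin.lt_def.mp (Finset.mem_Iio.mp hk)
          have := h k
          exact Finset.mem_Iic.mpr (Fin.le_def.mpr (by omega)))
      (fun a _ b _ hab => σ.injective hab)
    have hjni : j ∉ insert j' (Iio i) := by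
      simp only [Finset.mem_insert, Finset.mem_Iio]
      push_neg
      exact ⟨hjj', le_of_lt hij⟩
    have hj'ni : j' ∉ Iio i := fun hh => absurd (Finset.mem_Iio.mp hh) (not_lt.mpr (le_of_lt hij'))
    rw [Finset.card_insert_of_notMem hjni, Finset.card_insert_of_notMem hj'ni,
      Fin.card_Iio, Fin.card_Iic] at hcard
    omega
  · intro i hi
    simp only [mem_filter, mem_univ, true_and] at hi
    set s : Finset (Fin n) := Finset.image σ.symm (Iio (σ i)) with hs
    have hscard : s.card = (i : ℕ) + 1 := by
      rw [hs, Finset.card_image_of_injective _ σ.symm.injective, Fin.card_Iio, hi]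
    have hnsub : ¬ s ⊆ Iio i := by
      intro hsub
      have := Finset.card_le_card hsub
      rw [hscard, Fin.card_Iio] at this
      omega
    obtain ⟨j, hjs, hjt⟩ := Finset.not_subset.mp hnsub
    have hσj : σ j < σ i := by
      rw [hs] at hjs
      obtain ⟨v, hv, rfl⟩ := Finset.mem_image.mp hjs
      simpa using Finset.mem_Iio.mp hv
    have hij : i < j := by
      rcases lt_trichotomy i j with h1 | h1 | h1
      · exact h1
      · exact absurd hσj (by simp [h1])
      · exact absurd (Finset.mem_Iio.mpr h1) hjt
    exact ⟨⟨i, j⟩, by simp [hij, hσj], rfl⟩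

theorem qperm_hessenberg_permanent {n : ℕ} (q : ℂ) (hq : q ≠ 0)
    (A : Matrix (Fin n) (Fin n) ℂ)
    (hA : ∀ i j : Fin n, (i : ℕ) + 1 < (j : ℕ) → A i j = 0) :
    qperm q A = perman (Matrix.of fun i j => q ^ (H0 n i j) * A i j) := by
  unfold qperm perman
  refine Finset.sum_congr rfl fun σ _ => ?_
  by_cases hσ : ∀ k : Fin n, (σ k : ℕ) ≤ (k : ℕ) + 1
  · have : (∏ i, (Matrix.of fun i j => q ^ (H0 n i j) * A i j) i (σ i))
        = (∏ i, q ^ (H0 n i (σ i))) * ∏ i, A i (σ i) := by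
      rw [← Finset.prod_mul_distrib]; rfl
    rw [this, key σ hσ, Finset.prod_pow_eq_pow_sum]
    congr 2
    rw [Finset.card_filter]
    exact Finset.sum_congr rfl fun i _ => rfl
  · push_neg at hσ
    obtain ⟨k, hk⟩ := hσ
    have hzero : A k (σ k) = 0 := hA k (σ k) hk
    rw [Finset.prod_eq_zero (mem_univ k) hzero,
      Finset.prod_eq_zero (mem_univ k) (by simp [hzero])]
    ring
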